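/- Define the upper triangular (n+1)×(n+1) matrices U_A and U_A* by u^A_{ij} = (−q^α a₁^{-1}a₂)^{j−i} t^{C(j,2)−C(i,2)} C_t(j,i) (a₁b₁t^{n−j};t)_{j−i} / (q^α a₂b₂t^{2i};t)_{j−i} for i ≤ j (0 otherwise), and u^{A*}_{ij} = (q^α a₁^{-1}a₂ t^{j−1})^{j−i} C_t(j,i) (a₁b₁t^{n−j};t)_{j−i} / (q^α a₂b₂ t^{j+i−1};t)_{j−i} for i ≤ j (0 otherwise). Then U_A · U_A* = I (the identity matrix). -/

import Mathlib

open scoped BigOperators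

/-- The c-shifted factorial (x;c)_k = (1−x)(1−cx)⋯(1−c^{k−1}x). -/
noncomputable def qPoch (x c : ℂ) (k : ℕ) : ℂ :=
  ∏ i ∈ Finset.range k, (1 - c ^ i * x)

/-- The c-binomial coefficient, zero when k > m. -/
noncomputable def qBinom (c : ℂ) (m k : ℕ) : ℂ :=
  if k ≤ m then qPoch c c m / (qPoch c c (m - k) * qPoch c c k) else 0

namespace UAaux
open Finset

lemma qPoch_zero (x c : ℂ) : qPoch x c 0 = 1 := by simp [qPoch]

lemma qPoch_succ (x c : ℂ) (k : ℕ) : qPoch x c (k + 1) = qPoch x c k * (1 - c ^ k * x) := by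
  simp [qPoch, Finset.prod_range_succ]

lemma qPoch_add (x t : ℂ) (a b : ℕ) :
    qPoch x t (a + b) = qPoch x t a * qPoch (t ^ a * x) t b := by
  induction b with
  | zero => simp [qPoch]
  | succ b ih =>
      rw [show a + (b + 1) = (a + b) + 1 from rfl, qPoch_succ, ih, qPoch_succ, mul_assoc]
      congr 2
      rw [pow_add]; ring

lemma qPoch_ne_zero (x t : ℂ) (m : ℕ) (h : ∀ l, l < m → 1 - t ^ l * x ≠ 0) :
    qPoch x t m ≠ 0 :=
  Finset.prod_ne_zero_iff.mpr fun l hl => h l (Finset.mem_range.mp hl)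

lemma qPoch_factor_ne_zero {x t : ℂ} {m : ℕ} (h : qPoch x t m ≠ 0) {l : ℕ} (hl : l < m) :
    1 - t ^ l * x ≠ 0 :=
  Finset.prod_ne_zero_iff.mp h l (Finset.mem_range.mpr hl)

variable {t : ℂ}

lemma Pt_ne (hroot : ∀ m : ℤ, m ≠ 0 → t ^ m ≠ 1) (m : ℕ) : qPoch t t m ≠ 0 := by
  apply qPoch_ne_zero
  intro l _ h
  apply hroot ((l : ℤ) + 1) (by omega)
  have h1 : t ^ l * t = 1 := by linear_combination -h
  have h2 : ((l : ℤ) + 1) = ((l + 1 : ℕ) : ℤ) := by push_cast; ring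
  rw [h2, zpow_natCast, pow_succ]
  exact h1

lemma qBinom_self (hroot : ∀ m : ℤ, m ≠ 0 → t ^ m ≠ 1) (m : ℕ) : qBinom t m m = 1 := by
  rw [qBinom, if_pos le_rfl, Nat.sub_self, qPoch_zero, one_mul, div_self (Pt_ne hroot m)]

lemma qBinom_zero (hroot : ∀ m : ℤ, m ≠ 0 → t ^ m ≠ 1) (m : ℕ) : qBinom t m 0 = 1 := by
  rw [qBinom, if_pos (Nat.zero_le m), Nat.sub_zero, qPoch_zero, mul_one, div_self (Pt_ne hroot m)]

lemma qBinom_eq_zero {m k : ℕ} (h : m < k) : qBinom t m k = 0 := by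
  rw [qBinom, if_neg (by omega)]

lemma choose_succ_two (s : ℕ) : (s + 1).choose 2 = s.choose 2 + s := by
  rw [Nat.choose_succ_succ, Nat.choose_one_right]
  exact Nat.add_comm _ _

lemma qBinom_pascal (hroot : ∀ m : ℤ, m ≠ 0 → t ^ m ≠ 1) (m k : ℕ) :
    qBinom t (m + 1) (k + 1) = qBinom t m (k + 1) + t ^ (m - k) * qBinom t m k := by
  by_cases hk : k + 1 ≤ m
  · obtain ⟨r, rfl⟩ := Nat.exists_eq_add_of_le hk
    rw [qBinom, qBinom, qBinom, if_pos (by omega), if_pos (by omega), if_pos (by omega)]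
    rw [show k + 1 + r + 1 - (k + 1) = r + 1 by omega, show k + 1 + r - (k + 1) = r by omega,
      show k + 1 + r - k = r + 1 by omega]
    rw [qPoch_succ t t (k + 1 + r), qPoch_succ t t r, qPoch_succ t t k]
    have hr := Pt_ne hroot r
    have hk' := Pt_ne hroot k
    have h1 : (1 : ℂ) - t ^ r * t ≠ 0 := by
      have := Pt_ne hroot (r + 1); rw [qPoch_succ] at this
      exact fun h => this (by rw [h, mul_zero])
    have h2 : (1 : ℂ) - t ^ k * t ≠ 0 := by
      have := Pt_ne hroot (k + 1); rw [qPoch_succ] at this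
      exact fun h => this (by rw [h, mul_zero])
    have h1' : (1 : ℂ) - t * t ^ r ≠ 0 := by rwa [mul_comm]
    have h2' : (1 : ℂ) - t * t ^ k ≠ 0 := by rwa [mul_comm]
    field_simp
    ring
  · by_cases hk2 : k = m
    · subst hk2
      rw [qBinom_self hroot, qBinom_eq_zero (by omega), qBinom_self hroot, Nat.sub_self]
      ring
    · rw [qBinom_eq_zero (by omega), qBinom_eq_zero (by omega), qBinom_eq_zero (by omega)]
      ring

lemma qbt (hroot : ∀ m : ℤ, m ≠ 0 → t ^ m ≠ 1) (d : ℕ) (x : ℂ) :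
    ∑ s ∈ range (d + 1), qBinom t d s * (-1) ^ s * x ^ s * t ^ s.choose 2 = qPoch x t d := by
  induction d with
  | zero => simp [qBinom_zero hroot, qPoch_zero]
  | succ d ih =>
      rw [Finset.sum_range_succ']
      have e0 : qBinom t (d + 1) 0 * (-1 : ℂ) ^ 0 * x ^ 0 * t ^ Nat.choose 0 2 = 1 := by
        simp [qBinom_zero hroot]
      rw [e0]
      have step : ∀ s ∈ range (d + 1),
          qBinom t (d + 1) (s + 1) * (-1) ^ (s + 1) * x ^ (s + 1) * t ^ (s + 1).choose 2
          = qBinom t d (s + 1) * (-1) ^ (s + 1) * x ^ (s + 1) * t ^ (s + 1).choose 2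
            + (-(t ^ d * x)) * (qBinom t d s * (-1) ^ s * x ^ s * t ^ s.choose 2) := by
        intro s hs
        rw [qBinom_pascal hroot]
        have hsd : s ≤ d := Nat.lt_succ_iff.mp (mem_range.mp hs)
        have hc := choose_succ_two s
        have hexp : (d - s) + (s + 1).choose 2 = d + s.choose 2 := by omega
        have ht2 : t ^ (d - s) * t ^ (s + 1).choose 2 = t ^ d * t ^ s.choose 2 := by
          rw [← pow_add, ← pow_add, hexp]
        calc (qBinom t d (s + 1) + t ^ (d - s) * qBinom t d s) * (-1) ^ (s + 1) * x ^ (s + 1)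
              * t ^ (s + 1).choose 2
            = qBinom t d (s + 1) * (-1) ^ (s + 1) * x ^ (s + 1) * t ^ (s + 1).choose 2
              + qBinom t d s * (-1) ^ (s + 1) * x ^ (s + 1)
                * (t ^ (d - s) * t ^ (s + 1).choose 2) := by ring
          _ = _ := by rw [ht2, pow_succ (-1 : ℂ), pow_succ x]; ring
      rw [Finset.sum_congr rfl step, Finset.sum_add_distrib, ← Finset.mul_sum, ih]
      have hA : ∑ s ∈ range (d + 1),
          qBinom t d (s + 1) * (-1 : ℂ) ^ (s + 1) * x ^ (s + 1) * t ^ (s + 1).choose 2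
          = qPoch x t d - 1 := by
        have h2 := Finset.sum_range_succ'
          (fun s => qBinom t d s * (-1 : ℂ) ^ s * x ^ s * t ^ s.choose 2) (d + 1)
        have h3 : ∑ s ∈ range (d + 1 + 1),
            qBinom t d s * (-1 : ℂ) ^ s * x ^ s * t ^ s.choose 2 = qPoch x t d := by
          rw [Finset.sum_range_succ, qBinom_eq_zero (Nat.lt_succ_self d)]
          rw [← ih]; ring
        have h4 : qBinom t d 0 * (-1 : ℂ) ^ 0 * x ^ 0 * t ^ Nat.choose 0 2 = 1 := by
          simp [qBinom_zero hroot]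
        rw [h3, h4] at h2
        linear_combination -h2
      rw [hA, qPoch_succ]
      ring

lemma keyC (hroot : ∀ m : ℤ, m ≠ 0 → t ^ m ≠ 1) (ht : t ≠ 0) (d : ℕ) (hd : 1 ≤ d) (y : ℂ) :
    ∑ s ∈ range (d + 1), qBinom t d s * (-1) ^ s *
      t ^ (((s + 1).choose 2 : ℤ) - (d : ℤ) * (s : ℤ)) * qPoch (y * t ^ s) t (d - 1) = 0 := by
  obtain ⟨D, rfl⟩ : ∃ D, d = D + 1 := ⟨d - 1, by omega⟩
  simp only [Nat.add_sub_cancel]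
  have expand : ∀ s : ℕ, qPoch (y * t ^ s) t D
      = ∑ m ∈ range (D + 1), qBinom t D m * (-1) ^ m * (y * t ^ s) ^ m * t ^ m.choose 2 :=
    fun s => (qbt hroot D _).symm
  rw [Finset.sum_congr rfl (fun s _ => by rw [expand s])]
  simp only [Finset.mul_sum]
  rw [Finset.sum_comm]
  apply Finset.sum_eq_zero
  intro m hm
  have hm' : m ≤ D := Nat.lt_succ_iff.mp (mem_range.mp hm)
  have key : ∀ s ∈ range (D + 1 + 1),
      qBinom t (D + 1) s * (-1 : ℂ) ^ s *
        t ^ (((s + 1).choose 2 : ℤ) - ((D + 1 : ℕ) : ℤ) * (s : ℤ)) *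
        (qBinom t D m * (-1) ^ m * (y * t ^ s) ^ m * t ^ m.choose 2)
      = (qBinom t D m * (-1) ^ m * y ^ m * t ^ m.choose 2) *
        (qBinom t (D + 1) s * (-1) ^ s * (t ^ ((m : ℤ) - (D : ℤ))) ^ s * t ^ s.choose 2) := by
    intro s _
    have h1 : (y * t ^ s) ^ m = y ^ m * t ^ (s * m) := by
      rw [mul_pow, ← pow_mul]
    have h2 : t ^ (((s + 1).choose 2 : ℤ) - ((D + 1 : ℕ) : ℤ) * (s : ℤ)) * t ^ (s * m)
        = (t ^ ((m : ℤ) - (D : ℤ))) ^ s * t ^ s.choose 2 := by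
      rw [← zpow_natCast t (s * m), ← zpow_natCast t (s.choose 2),
        ← zpow_natCast (t ^ ((m : ℤ) - (D : ℤ))) s, ← zpow_mul, ← zpow_add₀ ht, ← zpow_add₀ ht]
      congr 1
      have hc := choose_succ_two s
      push_cast [hc]
      ring
    calc qBinom t (D + 1) s * (-1 : ℂ) ^ s *
          t ^ (((s + 1).choose 2 : ℤ) - ((D + 1 : ℕ) : ℤ) * (s : ℤ)) *
          (qBinom t D m * (-1) ^ m * (y * t ^ s) ^ m * t ^ m.choose 2)
        = (qBinom t D m * (-1) ^ m * y ^ m * t ^ m.choose 2) *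
          (qBinom t (D + 1) s * (-1) ^ s *
            (t ^ (((s + 1).choose 2 : ℤ) - ((D + 1 : ℕ) : ℤ) * (s : ℤ)) * t ^ (s * m))) := by
          rw [h1]; ring
      _ = _ := by rw [h2]; ring
  rw [Finset.sum_congr rfl key, ← Finset.mul_sum, qbt hroot (D + 1) (t ^ ((m : ℤ) - (D : ℤ)))]
  have hzero : qPoch (t ^ ((m : ℤ) - (D : ℤ))) t (D + 1) = 0 := by
    apply Finset.prod_eq_zero (Finset.mem_range.mpr (show D - m < D + 1 by omega))
    rw [← zpow_natCast t (D - m), ← zpow_add₀ ht]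
    rw [show ((D - m : ℕ) : ℤ) + ((m : ℤ) - (D : ℤ)) = 0 by push_cast [Nat.cast_sub hm']; ring]
    simp
  rw [hzero, mul_zero]

lemma choose_add (i s : ℕ) : (i + s).choose 2 = i.choose 2 + i * s + s.choose 2 := by
  induction s with
  | zero => simp
  | succ s ih =>
      rw [show i + (s + 1) = (i + s) + 1 from rfl, choose_succ_two, ih, choose_succ_two,
        Nat.mul_succ]
      omega

lemma qBinom_mul (hroot : ∀ m : ℤ, m ≠ 0 → t ^ m ≠ 1) (I s e : ℕ) :
    qBinom t (I + s) I * qBinom t (I + s + e) (I + s)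
      = qBinom t (I + s + e) I * qBinom t (s + e) s := by
  rw [qBinom, qBinom, qBinom, qBinom, if_pos (by omega), if_pos (by omega), if_pos (by omega),
    if_pos (by omega)]
  rw [show I + s - I = s by omega, show I + s + e - (I + s) = e by omega,
    show I + s + e - I = s + e by omega, show s + e - s = e by omega]
  have h1 := Pt_ne hroot I
  have h2 := Pt_ne hroot s
  have h3 := Pt_ne hroot e
  have h4 := Pt_ne hroot (s + e)
  have h5 := Pt_ne hroot (I + s)
  have h6 := Pt_ne hroot (I + s + e)
  field_simp

lemma qPoch_shift_ne (x t : ℂ) (w m : ℕ) (h : ∀ l, l < w + m → 1 - t ^ l * x ≠ 0) :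
    qPoch (x * t ^ w) t m ≠ 0 := by
  apply qPoch_ne_zero
  intro l hl
  rw [show (1 : ℂ) - t ^ l * (x * t ^ w) = 1 - t ^ (w + l) * x by rw [pow_add]; ring]
  exact h _ (by omega)

set_option maxHeartbeats 1600000 in
lemma term_eq (n I s e : ℕ) (qa a₁ a₂ b₁ b₂ t : ℂ) (ht : t ≠ 0) (ha₁ : a₁ ≠ 0)
    (hroot : ∀ m : ℤ, m ≠ 0 → t ^ m ≠ 1) (hd : 1 ≤ s + e) (hn : I + s + e ≤ n)
    (hB : ∀ l : ℕ, l < 2 * (s + e) - 1 → 1 - t ^ l * (qa * a₂ * b₂ * t ^ (2 * I)) ≠ 0) :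
    ((-(qa * a₁⁻¹ * a₂)) ^ s * t ^ ((I + s) * (I + s - 1) / 2 - I * (I - 1) / 2) *
        qBinom t (I + s) I *
        (qPoch (a₁ * b₁ * t ^ (n - (I + s))) t s /
          qPoch (qa * a₂ * b₂ * t ^ (2 * I)) t s)) *
      ((qa * a₁⁻¹ * a₂ * t ^ (((I + s + e : ℕ) : ℤ) - 1)) ^ e *
        qBinom t (I + s + e) (I + s) *
        (qPoch (a₁ * b₁ * t ^ (n - (I + s + e))) t e /
          qPoch (qa * a₂ * b₂ * t ^ (((I + s + e : ℕ) : ℤ) + ((I + s : ℕ) : ℤ) - 1)) t e))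
    = (qa * a₁⁻¹ * a₂) ^ (s + e) * qBinom t (I + s + e) I *
        qPoch (a₁ * b₁ * t ^ (n - (I + s + e))) t (s + e) * t ^ ((I + s + e - 1) * (s + e)) /
        qPoch (qa * a₂ * b₂ * t ^ (2 * I)) t (2 * (s + e) - 1) *
      (qBinom t (s + e) s * (-1) ^ s *
        t ^ (((s + 1).choose 2 : ℤ) - ((s + e : ℕ) : ℤ) * (s : ℤ)) *
        qPoch (qa * a₂ * b₂ * t ^ (2 * I) * t ^ s) t (s + e - 1)) := by
  have hpJ : (I + s) * (I + s - 1) / 2 - I * (I - 1) / 2 = I * s + s.choose 2 := by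
    rw [← Nat.choose_two_right, ← Nat.choose_two_right, choose_add]
    omega
  rw [hpJ]
  have hQ := qBinom_mul hroot I s e
  have hsplit : t ^ (((s + 1).choose 2 : ℤ) - ((s + e : ℕ) : ℤ) * (s : ℤ))
      = t ^ ((s + 1).choose 2) / t ^ ((s + e) * s) := by
    rw [show (((s + 1).choose 2 : ℤ) - ((s + e : ℕ) : ℤ) * (s : ℤ))
        = (((s + 1).choose 2 : ℕ) : ℤ) - (((s + e) * s : ℕ) : ℤ) by push_cast; ring,
      zpow_sub₀ ht, zpow_natCast, zpow_natCast]
  by_cases he : e = 0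
  · subst he
    obtain ⟨g, rfl⟩ : ∃ g, s = g + 1 := ⟨s - 1, by omega⟩
    simp only [Nat.add_zero, qPoch_zero] at hsplit hB hQ ⊢
    rw [hsplit]
    have hD1 : qPoch (qa * a₂ * b₂ * t ^ (2 * I)) t (g + 1) ≠ 0 :=
      qPoch_ne_zero _ _ _ fun l hl => hB l (by omega)
    have hDf : qPoch (qa * a₂ * b₂ * t ^ (2 * I)) t (2 * (g + 1) - 1) ≠ 0 :=
      qPoch_ne_zero _ _ _ fun l hl => hB l (by omega)
    have hP : qPoch (qa * a₂ * b₂ * t ^ (2 * I) * t ^ (g + 1)) t (g + 1 - 1) ≠ 0 :=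
      qPoch_shift_ne _ _ _ _ fun l hl => hB l (by omega)
    have hden2 : qPoch (qa * a₂ * b₂ * t ^ (2 * I)) t (2 * (g + 1) - 1)
        = qPoch (qa * a₂ * b₂ * t ^ (2 * I)) t (g + 1) *
          qPoch (qa * a₂ * b₂ * t ^ (2 * I) * t ^ (g + 1)) t (g + 1 - 1) := by
      rw [show 2 * (g + 1) - 1 = (g + 1) + g by omega, qPoch_add,
        show t ^ (g + 1) * (qa * a₂ * b₂ * t ^ (2 * I))
          = qa * a₂ * b₂ * t ^ (2 * I) * t ^ (g + 1) by ring,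
        show (g + 1) - 1 = g by omega]
    rw [hden2, choose_succ_two (g + 1), choose_succ_two g,
      show I + (g + 1) - 1 = I + g by omega]
    simp only [qBinom_self hroot]
    trans (((-(qa * a₁⁻¹ * a₂)) ^ (g + 1) * t ^ (I * (g + 1) + (g.choose 2 + g)) *
        qBinom t (I + (g + 1)) I * qPoch (a₁ * b₁ * t ^ (n - (I + (g + 1)))) t (g + 1)) /
        qPoch (qa * a₂ * b₂ * t ^ (2 * I)) t (g + 1))
    · ring
    trans (((qa * a₁⁻¹ * a₂) ^ (g + 1) * qBinom t (I + (g + 1)) I *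
        qPoch (a₁ * b₁ * t ^ (n - (I + (g + 1)))) t (g + 1) * t ^ ((I + g) * (g + 1)) *
        (-1) ^ (g + 1) * t ^ (g.choose 2 + g + (g + 1)) *
        qPoch (qa * a₂ * b₂ * t ^ (2 * I) * t ^ (g + 1)) t (g + 1 - 1)) /
        (qPoch (qa * a₂ * b₂ * t ^ (2 * I)) t (g + 1) *
          qPoch (qa * a₂ * b₂ * t ^ (2 * I) * t ^ (g + 1)) t (g + 1 - 1) *
          t ^ ((g + 1) * (g + 1))))
    · rw [div_eq_div_iff hD1 (mul_ne_zero (mul_ne_zero hD1 hP) (pow_ne_zero _ ht))]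
      ring
    · ring
  · obtain ⟨e', rfl⟩ : ∃ e', e = e' + 1 := ⟨e - 1, by omega⟩
    have hD1 : qPoch (qa * a₂ * b₂ * t ^ (2 * I)) t s ≠ 0 :=
      qPoch_ne_zero _ _ _ fun l hl => hB l (by omega)
    have hDf : qPoch (qa * a₂ * b₂ * t ^ (2 * I)) t (2 * (s + (e' + 1)) - 1) ≠ 0 :=
      qPoch_ne_zero _ _ _ fun l hl => hB l (by omega)
    have hP : qPoch (qa * a₂ * b₂ * t ^ (2 * I) * t ^ s) t (s + (e' + 1) - 1) ≠ 0 :=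
      qPoch_shift_ne _ _ _ _ fun l hl => hB l (by omega)
    have hD2 : qPoch (qa * a₂ * b₂ * t ^ (2 * I) * t ^ (2 * s + e')) t (e' + 1) ≠ 0 :=
      qPoch_shift_ne _ _ _ _ fun l hl => hB l (by omega)
    -- normalize the zpow scalar
    rw [show ((I + s + (e' + 1) : ℕ) : ℤ) - 1 = ((I + s + e' : ℕ) : ℤ) by push_cast; ring,
      zpow_natCast]
    -- normalize the zpow denominator argument
    rw [show ((I + s + (e' + 1) : ℕ) : ℤ) + ((I + s : ℕ) : ℤ) - 1
        = ((2 * I + (2 * s + e') : ℕ) : ℤ) by push_cast; ring, zpow_natCast]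
    rw [show qa * a₂ * b₂ * t ^ (2 * I + (2 * s + e'))
        = qa * a₂ * b₂ * t ^ (2 * I) * t ^ (2 * s + e') by rw [pow_add]; ring]
    -- numerator exponent
    rw [show n - (I + s) = (n - (I + s + (e' + 1))) + (e' + 1) by omega]
    have hnum : qPoch (a₁ * b₁ * t ^ ((n - (I + s + (e' + 1))) + (e' + 1))) t s *
        qPoch (a₁ * b₁ * t ^ (n - (I + s + (e' + 1)))) t (e' + 1)
        = qPoch (a₁ * b₁ * t ^ (n - (I + s + (e' + 1)))) t (s + (e' + 1)) := by
      have h0 := qPoch_add (a₁ * b₁ * t ^ (n - (I + s + (e' + 1)))) t (e' + 1) s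
      rw [show t ^ (e' + 1) * (a₁ * b₁ * t ^ (n - (I + s + (e' + 1))))
          = a₁ * b₁ * t ^ ((n - (I + s + (e' + 1))) + (e' + 1)) by rw [pow_add]; ring] at h0
      rw [show s + (e' + 1) = (e' + 1) + s by omega, h0]
      ring
    have hden2 : qPoch (qa * a₂ * b₂ * t ^ (2 * I)) t (2 * (s + (e' + 1)) - 1)
        = qPoch (qa * a₂ * b₂ * t ^ (2 * I)) t s *
          (qPoch (qa * a₂ * b₂ * t ^ (2 * I) * t ^ s) t (s + (e' + 1) - 1) *
            qPoch (qa * a₂ * b₂ * t ^ (2 * I) * t ^ (2 * s + e')) t (e' + 1)) := by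
      rw [show 2 * (s + (e' + 1)) - 1 = s + ((s + e') + (e' + 1)) by omega, qPoch_add, qPoch_add,
        show t ^ s * (qa * a₂ * b₂ * t ^ (2 * I))
          = qa * a₂ * b₂ * t ^ (2 * I) * t ^ s by ring,
        show t ^ (s + e') * (qa * a₂ * b₂ * t ^ (2 * I) * t ^ s)
          = qa * a₂ * b₂ * t ^ (2 * I) * t ^ (2 * s + e') by rw [pow_add, pow_add]; ring,
        show s + (e' + 1) - 1 = s + e' by omega]
    have hQ4 : qBinom t (s + (e' + 1)) s ≠ 0 := by
      rw [qBinom, if_pos (by omega)]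
      exact div_ne_zero (Pt_ne hroot _) (mul_ne_zero (Pt_ne hroot _) (Pt_ne hroot _))
    have hQ3 : qBinom t (I + s + (e' + 1)) I
        = qBinom t (I + s) I * qBinom t (I + s + (e' + 1)) (I + s) /
          qBinom t (s + (e' + 1)) s := by
      rw [eq_div_iff hQ4]
      exact hQ.symm
    rw [hsplit, hden2, choose_succ_two s, show I + s + (e' + 1) - 1 = I + s + e' by omega,
      ← hnum]
    rw [hQ3]
    trans (((-(qa * a₁⁻¹ * a₂)) ^ s * t ^ (I * s + s.choose 2) * qBinom t (I + s) I *
        qPoch (a₁ * b₁ * t ^ ((n - (I + s + (e' + 1))) + (e' + 1))) t s *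
        (qa * a₁⁻¹ * a₂ * t ^ (I + s + e')) ^ (e' + 1) * qBinom t (I + s + (e' + 1)) (I + s) *
        qPoch (a₁ * b₁ * t ^ (n - (I + s + (e' + 1)))) t (e' + 1)) /
        (qPoch (qa * a₂ * b₂ * t ^ (2 * I)) t s *
          qPoch (qa * a₂ * b₂ * t ^ (2 * I) * t ^ (2 * s + e')) t (e' + 1)))
    · ring
    trans (((qa * a₁⁻¹ * a₂) ^ (s + (e' + 1)) * qBinom t (I + s) I *
        qBinom t (I + s + (e' + 1)) (I + s) *
        qPoch (a₁ * b₁ * t ^ ((n - (I + s + (e' + 1))) + (e' + 1))) t s *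
        qPoch (a₁ * b₁ * t ^ (n - (I + s + (e' + 1)))) t (e' + 1) *
        t ^ ((I + s + e') * (s + (e' + 1))) * qBinom t (s + (e' + 1)) s * (-1) ^ s *
        t ^ (s.choose 2 + s) *
        qPoch (qa * a₂ * b₂ * t ^ (2 * I) * t ^ s) t (s + (e' + 1) - 1)) /
        (qBinom t (s + (e' + 1)) s *
          (qPoch (qa * a₂ * b₂ * t ^ (2 * I)) t s *
            (qPoch (qa * a₂ * b₂ * t ^ (2 * I) * t ^ s) t (s + (e' + 1) - 1) *
              qPoch (qa * a₂ * b₂ * t ^ (2 * I) * t ^ (2 * s + e')) t (e' + 1))) *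
          t ^ ((s + (e' + 1)) * s)))
    · rw [div_eq_div_iff (mul_ne_zero hD1 hD2)
        (mul_ne_zero (mul_ne_zero hQ4 (mul_ne_zero hD1 (mul_ne_zero hP hD2)))
          (pow_ne_zero _ ht))]
      ring
    · ring

end UAaux

/-- The upper triangular factor U_A of the Gauss decomposition of A. -/
noncomputable def matUA (n : ℕ) (qa a₁ a₂ b₁ b₂ t : ℂ) :
    Matrix (Fin (n + 1)) (Fin (n + 1)) ℂ :=
  Matrix.of fun i j =>
    if (i : ℕ) ≤ (j : ℕ) then
      (-(qa * a₁⁻¹ * a₂)) ^ ((j : ℕ) - (i : ℕ)) *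
        t ^ ((j : ℕ) * ((j : ℕ) - 1) / 2 - (i : ℕ) * ((i : ℕ) - 1) / 2) *
        qBinom t (j : ℕ) (i : ℕ) *
        (qPoch (a₁ * b₁ * t ^ (n - (j : ℕ))) t ((j : ℕ) - (i : ℕ)) /
          qPoch (qa * a₂ * b₂ * t ^ (2 * (i : ℕ))) t ((j : ℕ) - (i : ℕ)))
    else 0

/-- The claimed inverse U_A* of U_A. -/
noncomputable def matUAstar (n : ℕ) (qa a₁ a₂ b₁ b₂ t : ℂ) :
    Matrix (Fin (n + 1)) (Fin (n + 1)) ℂ :=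
  Matrix.of fun i j =>
    if (i : ℕ) ≤ (j : ℕ) then
      (qa * a₁⁻¹ * a₂ * t ^ ((j : ℤ) - 1)) ^ ((j : ℕ) - (i : ℕ)) *
        qBinom t (j : ℕ) (i : ℕ) *
        (qPoch (a₁ * b₁ * t ^ (n - (j : ℕ))) t ((j : ℕ) - (i : ℕ)) /
          qPoch (qa * a₂ * b₂ * t ^ ((j : ℤ) + (i : ℕ) - 1)) t ((j : ℕ) - (i : ℕ)))
    else 0

set_option maxHeartbeats 1600000 in
/-- Proposition 4.4: U_A · U_A* = I. Here qa plays the role of q^α. -/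
theorem UA_mul_UAstar (n : ℕ) (qa a₁ a₂ b₁ b₂ t : ℂ)
    (hqa : qa ≠ 0) (ha₁ : a₁ ≠ 0) (ha₂ : a₂ ≠ 0) (hb₁ : b₁ ≠ 0) (hb₂ : b₂ ≠ 0) (ht : t ≠ 0)
    (hroot : ∀ m : ℤ, m ≠ 0 → t ^ m ≠ 1)
    (hden : ∀ i j : ℕ, i ≤ j → j ≤ n →
      qPoch (qa * a₂ * b₂ * t ^ (2 * i)) t (j - i) ≠ 0 ∧
      qPoch (qa * a₂ * b₂ * t ^ ((j : ℤ) + i - 1)) t (j - i) ≠ 0) :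
    matUA n qa a₁ a₂ b₁ b₂ t * matUAstar n qa a₁ a₂ b₁ b₂ t = 1 := by
  ext i j
  rw [Matrix.mul_apply, Matrix.one_apply]
  by_cases hij : (i : ℕ) ≤ (j : ℕ)
  · rcases eq_or_lt_of_le hij with heq | hlt
    · have hij' : i = j := Fin.ext heq
      subst hij'
      rw [if_pos rfl, Finset.sum_eq_single i]
      · simp only [matUA, matUAstar, Matrix.of_apply, le_refl, if_true, Nat.sub_self,
          pow_zero, UAaux.qPoch_zero, UAaux.qBinom_self hroot]
        norm_num
      · intro k _ hk
        have hk' : (k : ℕ) ≠ (i : ℕ) := fun h => hk (Fin.ext h)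
        rcases Nat.lt_or_ge (k : ℕ) (i : ℕ) with h | h
        · have h2 : ¬ ((i : ℕ) ≤ (k : ℕ)) := by omega
          have hz : matUA n qa a₁ a₂ b₁ b₂ t i k = 0 := by
            simp only [matUA, Matrix.of_apply]
            rw [if_neg h2]
          rw [hz, zero_mul]
        · have h2 : ¬ ((k : ℕ) ≤ (i : ℕ)) := by omega
          have hz : matUAstar n qa a₁ a₂ b₁ b₂ t k i = 0 := by
            simp only [matUAstar, Matrix.of_apply]
            rw [if_neg h2]
          rw [hz, mul_zero]
      · intro h
        exact absurd (Finset.mem_univ i) h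
    · rw [if_neg (by intro h; subst h; omega)]
      set I := (i : ℕ) with hIdef
      set J := (j : ℕ) with hJdef
      have hJn : J ≤ n := Nat.lt_succ_iff.mp j.isLt
      set d := J - I with hdd
      have hd1 : 1 ≤ d := by omega
      have hB : ∀ l : ℕ, l < 2 * d - 1 →
          1 - t ^ l * (qa * a₂ * b₂ * t ^ (2 * I)) ≠ 0 := by
        intro l hl
        by_cases hld : l < d
        · have h1 := (hden I J (by omega) hJn).1
          rw [← hdd] at h1
          exact UAaux.qPoch_factor_ne_zero h1 hld
        · have h2 := (hden I J (by omega) hJn).2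
          rw [← hdd] at h2
          have hl2 : l - (d - 1) < d := by omega
          have hf := UAaux.qPoch_factor_ne_zero h2 hl2
          rw [show ((J : ℤ) + (I : ℕ) - 1) = ((J + I - 1 : ℕ) : ℤ) by push_cast; omega,
            zpow_natCast] at hf
          have key : t ^ (l - (d - 1)) * (qa * a₂ * b₂ * t ^ (J + I - 1))
              = t ^ l * (qa * a₂ * b₂ * t ^ (2 * I)) := by
            have e1 : l - (d - 1) + (J + I - 1) = l + 2 * I := by omega
            calc t ^ (l - (d - 1)) * (qa * a₂ * b₂ * t ^ (J + I - 1))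
                = qa * a₂ * b₂ * t ^ (l - (d - 1) + (J + I - 1)) := by rw [pow_add]; ring
              _ = qa * a₂ * b₂ * t ^ (l + 2 * I) := by rw [e1]
              _ = t ^ l * (qa * a₂ * b₂ * t ^ (2 * I)) := by rw [pow_add]; ring
          rw [key] at hf
          exact hf
      set F : ℕ → ℂ := fun k =>
        (if I ≤ k then
          (-(qa * a₁⁻¹ * a₂)) ^ (k - I) * t ^ (k * (k - 1) / 2 - I * (I - 1) / 2) *
            qBinom t k I *
            (qPoch (a₁ * b₁ * t ^ (n - k)) t (k - I) /
              qPoch (qa * a₂ * b₂ * t ^ (2 * I)) t (k - I)) else 0) *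
        (if k ≤ J then
          (qa * a₁⁻¹ * a₂ * t ^ ((J : ℤ) - 1)) ^ (J - k) * qBinom t J k *
            (qPoch (a₁ * b₁ * t ^ (n - J)) t (J - k) /
              qPoch (qa * a₂ * b₂ * t ^ ((J : ℤ) + (k : ℕ) - 1)) t (J - k)) else 0)
        with hFdef
      have hF : ∀ k : Fin (n + 1),
          matUA n qa a₁ a₂ b₁ b₂ t i k * matUAstar n qa a₁ a₂ b₁ b₂ t k j = F (k : ℕ) :=
        fun k => rfl
      rw [Finset.sum_congr rfl fun k _ => hF k]
      rw [Fin.sum_univ_eq_sum_range F (n + 1)]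
      have hsub : Finset.Ico I (J + 1) ⊆ Finset.range (n + 1) := by
        intro k hk
        rw [Finset.mem_Ico] at hk
        exact Finset.mem_range.mpr (by omega)
      have hvan : ∀ k ∈ Finset.range (n + 1), k ∉ Finset.Ico I (J + 1) → F k = 0 := by
        intro k _ hk
        rw [Finset.mem_Ico] at hk
        push_neg at hk
        by_cases h1 : I ≤ k
        · have h2 : ¬ (k ≤ J) := by have := hk h1; omega
          simp [hFdef, h2]
        · simp [hFdef, h1]
      rw [← Finset.sum_subset hsub hvan, Finset.sum_Ico_eq_sum_range,
        show J + 1 - I = d + 1 by omega]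
      have step : ∀ s ∈ Finset.range (d + 1), F (I + s)
          = ((qa * a₁⁻¹ * a₂) ^ d * qBinom t (I + d) I *
              qPoch (a₁ * b₁ * t ^ (n - (I + d))) t d * t ^ ((I + d - 1) * d) /
              qPoch (qa * a₂ * b₂ * t ^ (2 * I)) t (2 * d - 1)) *
            (qBinom t d s * (-1) ^ s *
              t ^ (((s + 1).choose 2 : ℤ) - (d : ℤ) * (s : ℤ)) *
              qPoch (qa * a₂ * b₂ * t ^ (2 * I) * t ^ s) t (d - 1)) := by
        intro s hs
        have hsd : s ≤ d := Nat.lt_succ_iff.mp (Finset.mem_range.mp hs)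
        obtain ⟨e, he⟩ : ∃ e, d = s + e := ⟨d - s, by omega⟩
        simp only [hFdef]
        rw [if_pos (by omega : I ≤ I + s), if_pos (by omega : I + s ≤ J)]
        rw [show J = I + s + e by omega]
        rw [Nat.add_sub_cancel_left, show I + s + e - (I + s) = e by omega]
        rw [show I + d = I + s + e by omega]
        rw [he]
        exact UAaux.term_eq n I s e qa a₁ a₂ b₁ b₂ t ht ha₁ hroot (by omega) (by omega)
          (fun l hl => hB l (by omega))
      rw [Finset.sum_congr rfl step, ← Finset.mul_sum,
        UAaux.keyC hroot ht d hd1 (qa * a₂ * b₂ * t ^ (2 * I)), mul_zero]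
  · rw [if_neg (by intro h; subst h; omega)]
    apply Finset.sum_eq_zero
    intro k _
    by_cases h1 : (i : ℕ) ≤ (k : ℕ)
    · have h2 : ¬ ((k : ℕ) ≤ (j : ℕ)) := by omega
      have hz : matUAstar n qa a₁ a₂ b₁ b₂ t k j = 0 := by
        simp only [matUAstar, Matrix.of_apply]
        rw [if_neg h2]
      rw [hz, mul_zero]
    · have hz : matUA n qa a₁ a₂ b₁ b₂ t i k = 0 := by
        simp only [matUA, Matrix.of_apply]
        rw [if_neg h1]
      rw [hz, zero_mul]
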